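/- Let X, Y, Z be Banach spaces, U ⊆ X an open set, and T : Y → X a compact bounded linear operator. If f : U → Z is locally Lipschitz and Gâteaux differentiable at a point T y ∈ U (where y ∈ Y), then f ∘ T is Fréchet differentiable at y, with Fréchet derivative equal to the composition of the Gâteaux derivative of f at T y with T. -/

import Mathlib

open Filter Metric Topology

section Defs
variable {X Z : Type*} [NormedAddCommGroup X] [NormedSpace ℝ X]
  [NormedAddCommGroup Z] [NormedSpace ℝ Z]

/-- `A` is the Gâteaux derivative of `f` at `x`: for every direction `h`,
`(f (x + t h) - f x)/t → A h` as `t → 0`, `t ≠ 0`. -/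
def HasGateauxDerivAt (f : X → Z) (A : X →L[ℝ] Z) (x : X) : Prop :=
  ∀ h : X, Tendsto (fun t : ℝ => t⁻¹ • (f (x + t • h) - f x)) (𝓝[≠] (0 : ℝ)) (𝓝 (A h))

/-- `f` is Gâteaux differentiable at `x`. -/
def GateauxDifferentiableAt (f : X → Z) (x : X) : Prop :=
  ∃ A : X →L[ℝ] Z, HasGateauxDerivAt f A x

/-- `f` is locally Lipschitz on `U`: every point of `U` has a neighborhood on
which `f` is Lipschitz (relative to `U`). -/
def LocallyLipschitzOnSet (f : X → Z) (U : Set X) : Prop :=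
  ∀ u ∈ U, ∃ (K : NNReal) (r : ℝ), 0 < r ∧ LipschitzOnWith K f (U ∩ ball u r)
end Defs

/-- Let `X`, `Y`, `Z` be Banach spaces, `U ⊆ X` open and `T : Y → X` a
compact bounded linear operator. If `f : U → Z` is locally Lipschitz and Gâteaux
differentiable at `T y ∈ U` with Gâteaux derivative `A`, then `f ∘ T` is Fréchet
differentiable at `y` with Fréchet derivative `A ∘ T`. -/
theorem compact_gateaux_implies_frechet
    {X Y Z : Type*} [NormedAddCommGroup X] [NormedSpace ℝ X] [CompleteSpace X]
    [NormedAddCommGroup Y] [NormedSpace ℝ Y] [CompleteSpace Y]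
    [NormedAddCommGroup Z] [NormedSpace ℝ Z] [CompleteSpace Z]
    (U : Set X) (hU : IsOpen U) (T : Y →L[ℝ] X)
    (hT : IsCompact (closure (⇑T '' closedBall 0 1)))
    (f : X → Z) (hf : LocallyLipschitzOnSet f U)
    (y : Y) (hy : T y ∈ U)
    (A : X →L[ℝ] Z) (hA : HasGateauxDerivAt f A (T y)) :
    HasFDerivAt (f ∘ T) (A.comp T) y := by
  obtain ⟨K, r, hr, hK⟩ := hf (T y) hy
  obtain ⟨r', hr', hball⟩ := Metric.isOpen_iff.mp hU (T y) hy
  set ρ := min r r' with hρdef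
  have hρ : 0 < ρ := lt_min hr hr'
  have hsub : ball (T y) ρ ⊆ U ∩ ball (T y) r := fun x hx =>
    ⟨hball (ball_subset_ball (min_le_right r r') hx),
      ball_subset_ball (min_le_left r r') hx⟩
  rw [hasFDerivAt_iff_isLittleO_nhds_zero, Asymptotics.isLittleO_iff]
  intro c hc
  set C : ℝ := (K : ℝ) + 1 + ‖A‖ with hCdef
  have hC0 : 0 < C := by positivity
  set ε := c / C with hεdef
  have hε0 : 0 < ε := div_pos hc hC0
  have htb : TotallyBounded (⇑T '' closedBall 0 1) :=
    hT.totallyBounded.subset subset_closure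
  obtain ⟨s, hsfin, hscov⟩ := totallyBounded_iff.mp htb ε hε0
  have hev : ∀ x ∈ s, ∀ᶠ t : ℝ in 𝓝[≠] (0:ℝ),
      ‖f (T y + t • x) - f (T y) - t • A x‖ ≤ ε * |t| ∧ |t| * ‖x‖ < ρ := by
    intro x hx
    have h1 := Metric.tendsto_nhds.mp (hA x) ε hε0
    have h2 : ∀ᶠ t : ℝ in 𝓝[≠] (0:ℝ), |t| * ‖x‖ < ρ := by
      apply eventually_nhdsWithin_of_eventually_nhds
      have : Tendsto (fun t : ℝ => |t| * ‖x‖) (𝓝 0) (𝓝 (|(0:ℝ)| * ‖x‖)) := by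
        exact (continuous_abs.mul continuous_const).tendsto 0
      simp only [abs_zero, zero_mul] at this
      exact this.eventually (eventually_lt_nhds hρ)
    filter_upwards [h1, h2, self_mem_nhdsWithin] with t ht1 ht2 ht0
    refine ⟨?_, ht2⟩
    have ht0' : t ≠ 0 := ht0
    have : ‖f (T y + t • x) - f (T y) - t • A x‖
        = |t| * ‖t⁻¹ • (f (T y + t • x) - f (T y)) - A x‖ := by
      rw [← Real.norm_eq_abs, ← norm_smul, smul_sub, smul_smul,
        mul_inv_cancel₀ ht0', one_smul]
    rw [this, dist_eq_norm] at *
    calc |t| * ‖t⁻¹ • (f (T y + t • x) - f (T y)) - A x‖ ≤ |t| * ε := by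
          exact mul_le_mul_of_nonneg_left ht1.le (abs_nonneg t)
      _ = ε * |t| := mul_comm _ _
  have hev2 : ∀ᶠ t : ℝ in 𝓝[≠] (0:ℝ), ∀ x ∈ s,
      ‖f (T y + t • x) - f (T y) - t • A x‖ ≤ ε * |t| ∧ |t| * ‖x‖ < ρ :=
    (eventually_all_finite hsfin).mpr hev
  rw [eventually_nhdsWithin_iff, Metric.eventually_nhds_iff] at hev2
  obtain ⟨δ, hδ0, hδ⟩ := hev2
  have hT1 : (0:ℝ) < ‖T‖ + 1 := by positivity
  rw [Metric.eventually_nhds_iff]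
  refine ⟨min δ (ρ / (‖T‖ + 1)), lt_min hδ0 (div_pos hρ hT1), fun k hk => ?_⟩
  rw [dist_zero_right] at hk
  rcases eq_or_ne k 0 with rfl | hk0
  · simp
  · have hknorm : 0 < ‖k‖ := norm_pos_iff.mpr hk0
    set t' := ‖k‖ with ht'def
    have hkδ : t' < δ := lt_of_lt_of_le hk (min_le_left _ _)
    have hkρ : ‖T‖ * ‖k‖ < ρ := by
      have h1 : ‖k‖ < ρ / (‖T‖ + 1) := lt_of_lt_of_le hk (min_le_right _ _)
      have h2 : ‖k‖ * (‖T‖ + 1) < ρ := (lt_div_iff₀ hT1).mp h1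
      nlinarith [T.opNorm_nonneg, hknorm]
    have hTk : ‖T k‖ < ρ := lt_of_le_of_lt (T.le_opNorm k) hkρ
    -- the direction
    set h : Y := t'⁻¹ • k with hhdef
    have hTh : T h ∈ ⇑T '' closedBall 0 1 := by
      refine ⟨h, ?_, rfl⟩
      rw [mem_closedBall_zero_iff, hhdef, norm_smul, norm_inv, Real.norm_eq_abs,
        abs_of_pos hknorm]
      exact le_of_eq (inv_mul_cancel₀ hknorm.ne')
    obtain ⟨x, hxs, hxd⟩ := Set.mem_iUnion₂.mp (hscov hTh)
    rw [mem_ball, dist_eq_norm] at hxd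
    -- apply hδ at t'
    have ht'ne : t' ∈ ({0}ᶜ : Set ℝ) := by
      simp [ht'def, hknorm.ne', hk0]
    have hdist : dist t' 0 < δ := by rwa [Real.dist_eq, sub_zero, abs_of_pos hknorm]
    obtain ⟨hP1, hP2⟩ := hδ hdist ht'ne x hxs
    rw [abs_of_pos hknorm] at hP1 hP2
    -- T k = t' • T h
    have hTkh : T k = t' • T h := by
      rw [hhdef, map_smul, smul_smul, mul_inv_cancel₀ hknorm.ne', one_smul]
    -- memberships
    have hm1 : T y + T k ∈ U ∩ ball (T y) r := by
      apply hsub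
      rw [mem_ball, dist_eq_norm]
      simpa using hTk
    have hm2 : T y + t' • x ∈ U ∩ ball (T y) r := by
      apply hsub
      rw [mem_ball, dist_eq_norm]
      simp only [add_sub_cancel_left, norm_smul, Real.norm_eq_abs, abs_of_pos hknorm]
      exact hP2
    -- Lipschitz estimate
    have hlip : ‖f (T y + T k) - f (T y + t' • x)‖ ≤ K * (t' * ε) := by
      have := hK.dist_le_mul _ hm1 _ hm2
      rw [dist_eq_norm, dist_eq_norm] at this
      refine this.trans ?_
      have : ‖T y + T k - (T y + t' • x)‖ = t' * ‖T h - x‖ := by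
        rw [hTkh]
        rw [show T y + t' • T h - (T y + t' • x) = t' • (T h - x) by module]
        rw [norm_smul, Real.norm_eq_abs, abs_of_pos hknorm]
      rw [this]
      exact mul_le_mul_of_nonneg_left
        (mul_le_mul_of_nonneg_left hxd.le hknorm.le) K.2
    -- derivative term estimate
    have hder : ‖t' • A x - A (T k)‖ ≤ ‖A‖ * (t' * ε) := by
      rw [hTkh, map_smul, ← smul_sub, norm_smul, Real.norm_eq_abs, abs_of_pos hknorm,
        show A x - A (T h) = A (x - T h) by rw [map_sub]]
      calc t' * ‖A (x - T h)‖ ≤ t' * (‖A‖ * ε) := by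
            have h1 := A.le_opNorm (x - T h)
            have h2 : ‖x - T h‖ ≤ ε := by rw [norm_sub_rev]; exact hxd.le
            exact mul_le_mul_of_nonneg_left
              (h1.trans (mul_le_mul_of_nonneg_left h2 A.opNorm_nonneg)) hknorm.le
        _ = ‖A‖ * (t' * ε) := by ring
    -- combine
    have key : ‖f (T y + T k) - f (T y) - A (T k)‖ ≤ C * (ε * t') := by
      have tri : ‖f (T y + T k) - f (T y) - A (T k)‖ ≤
          ‖f (T y + T k) - f (T y + t' • x)‖ +
          ‖f (T y + t' • x) - f (T y) - t' • A x‖ + ‖t' • A x - A (T k)‖ := by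
        have := norm_add₃_le (a := f (T y + T k) - f (T y + t' • x))
          (b := f (T y + t' • x) - f (T y) - t' • A x) (c := t' • A x - A (T k))
        convert this using 2
        · rfl
        abel
      calc ‖f (T y + T k) - f (T y) - A (T k)‖
          ≤ K * (t' * ε) + ε * t' + ‖A‖ * (t' * ε) :=
            tri.trans (by gcongr)
        _ = C * (ε * t') := by rw [hCdef]; ring
    simp only [Function.comp_apply, ContinuousLinearMap.coe_comp', map_add]
    calc ‖f (T y + T k) - f (T y) - A (T k)‖ ≤ C * (ε * t') := key
      _ = c * ‖k‖ := by rw [hεdef]; field_simp; exact ht'def
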